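/- Let (A, μ, α) be a multiplicative Hom-algebra over a field k of characteristic 0. Then the following are equivalent: (1) x²α(x) = α(x)x² and x⁴ = α(x²)α(x²) for all x ∈ A; (2) as(x,x,x) = 0 and as(x², α(x), α(x)) = 0 for all x ∈ A; (3) A is up to fourth Hom-power associative. -/

import Mathlib

variable {k A : Type*} [Field k] [CharZero k] [AddCommGroup A] [Module k A]

/-- The `n`-th Hom-power: `x^1 = x`, `x^n = x^{n-1} · α^{n-2}(x)`. -/
def homPow (μ : A →ₗ[k] A →ₗ[k] A) (α : A →ₗ[k] A) (x : A) : ℕ → A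
  | 0 => x
  | 1 => x
  | n + 2 => μ (homPow μ α x (n + 1)) ((α ^ n) x)

/-- `A` is `n`-th Hom-power associative. -/
def IsNthHomPowerAssoc (μ : A →ₗ[k] A →ₗ[k] A) (α : A →ₗ[k] A) (n : ℕ) : Prop :=
  ∀ (x : A) (i : ℕ), 1 ≤ i → i ≤ n - 1 →
    homPow μ α x n =
      μ ((α ^ (n - i - 1)) (homPow μ α x i)) ((α ^ (i - 1)) (homPow μ α x (n - i)))

/-- `A` is Hom-power associative. -/
def IsHomPowerAssoc (μ : A →ₗ[k] A →ₗ[k] A) (α : A →ₗ[k] A) : Prop :=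
  ∀ n : ℕ, 2 ≤ n → IsNthHomPowerAssoc μ α n

/-- `A` is up to `n`-th Hom-power associative. -/
def IsUpToNthHomPowerAssoc (μ : A →ₗ[k] A →ₗ[k] A) (α : A →ₗ[k] A) (n : ℕ) : Prop :=
  ∀ m : ℕ, 2 ≤ m → m ≤ n → IsNthHomPowerAssoc μ α m

/-- The Hom-algebra `(A, μ, α)` is multiplicative. -/
def IsMultiplicative (μ : A →ₗ[k] A →ₗ[k] A) (α : A →ₗ[k] A) : Prop :=
  ∀ x y : A, α (μ x y) = μ (α x) (α y)


/-- The Hom-associator `as(x,y,z) = (xy)α(z) − α(x)(yz)`. -/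
def homAssoc (μ : A →ₗ[k] A →ₗ[k] A) (α : A →ₗ[k] A) (x y z : A) : A :=
  μ (μ x y) (α z) - μ (α x) (μ y z)

set_option linter.unusedSectionVars false

private lemma hp2 (μ : A →ₗ[k] A →ₗ[k] A) (α : A →ₗ[k] A) (x : A) :
    homPow μ α x 2 = μ x x := by simp [homPow]

private lemma hp3 (μ : A →ₗ[k] A →ₗ[k] A) (α : A →ₗ[k] A) (x : A) :
    homPow μ α x 3 = μ (μ x x) (α x) := by simp [homPow]

private lemma hp4 (μ : A →ₗ[k] A →ₗ[k] A) (α : A →ₗ[k] A) (x : A) :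
    homPow μ α x 4 = μ (μ (μ x x) (α x)) (α (α x)) := by
  simp [homPow, pow_two, Module.End.mul_apply]

private lemma lin3 (μ : A →ₗ[k] A →ₗ[k] A) (α : A →ₗ[k] A)
    (h1 : ∀ x : A, μ (μ x x) (α x) = μ (α x) (μ x x)) (a b : A) :
    μ (μ a b) (α b) + μ (μ b a) (α b) + μ (μ b b) (α a)
      = μ (α a) (μ b b) + μ (α b) (μ a b) + μ (α b) (μ b a) := by
  have e1 := h1 (a + b)
  have e2 := h1 (a - b)
  have e3 := h1 a
  simp only [map_add, map_sub, LinearMap.add_apply, LinearMap.sub_apply] at e1 e2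
  have E : (2:k) • (μ (μ a b) (α b) + μ (μ b a) (α b) + μ (μ b b) (α a)
      - (μ (α a) (μ b b) + μ (α b) (μ a b) + μ (α b) (μ b a))) = 0 := by
    linear_combination (norm := module) e1 + e2 - (2:k) • e3
  rcases smul_eq_zero.mp E with h | h
  · exact absurd h two_ne_zero
  · exact sub_eq_zero.mp h

/-- Key: third Hom-power associativity implies `x³ α²(x) = α²(x) x³`. -/
private lemma key4 (μ : A →ₗ[k] A →ₗ[k] A) (α : A →ₗ[k] A)
    (hmul : IsMultiplicative μ α)
    (h1 : ∀ x : A, μ (μ x x) (α x) = μ (α x) (μ x x)) (x : A) :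
    μ (μ (μ x x) (α x)) (α (α x)) = μ (α (α x)) (μ (μ x x) (α x)) := by
  have L := lin3 μ α h1 (μ x x) (α x)
  rw [← hmul x x] at L
  rw [h1 x]
  have E : (2:k) • (μ (μ (α x) (μ x x)) (α (α x)) - μ (α (α x)) (μ (α x) (μ x x))) = 0 := by
    rw [h1 x] at L
    linear_combination (norm := module) L
  rcases smul_eq_zero.mp E with h | h
  · exact absurd h two_ne_zero
  · exact sub_eq_zero.mp h

/-- Corollary: for a multiplicative Hom-algebra the following are equivalent:
(1) `x²α(x) = α(x)x²` and `x⁴ = α(x²)α(x²)`;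
(2) `as(x,x,x) = 0` and `as(x²,α(x),α(x)) = 0`;
(3) `A` is up to fourth Hom-power associative. -/
theorem stmt12 (μ : A →ₗ[k] A →ₗ[k] A) (α : A →ₗ[k] A)
    (hmul : IsMultiplicative μ α) :
    ((∀ x : A, μ (μ x x) (α x) = μ (α x) (μ x x) ∧
        homPow μ α x 4 = μ (α (μ x x)) (α (μ x x))) ↔
      (∀ x : A, homAssoc μ α x x x = 0 ∧ homAssoc μ α (μ x x) (α x) (α x) = 0)) ∧
    ((∀ x : A, homAssoc μ α x x x = 0 ∧ homAssoc μ α (μ x x) (α x) (α x) = 0) ↔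
      IsUpToNthHomPowerAssoc μ α 4) := by
  have h12 : (∀ x : A, μ (μ x x) (α x) = μ (α x) (μ x x) ∧
        homPow μ α x 4 = μ (α (μ x x)) (α (μ x x))) ↔
      (∀ x : A, homAssoc μ α x x x = 0 ∧ homAssoc μ α (μ x x) (α x) (α x) = 0) := by
    apply forall_congr'
    intro x
    rw [hp4, homAssoc, homAssoc, ← hmul x x, sub_eq_zero, sub_eq_zero]
  refine ⟨h12, ?_, ?_⟩
  · intro h2
    have h1 : ∀ y : A, μ (μ y y) (α y) = μ (α y) (μ y y) := by
      intro y
      have := (h2 y).1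
      rwa [homAssoc, sub_eq_zero] at this
    intro m hm2 hm4 x i hi1 hi2
    have h1x := h1 x
    have h2x : μ (μ (μ x x) (α x)) (α (α x)) = μ (α (μ x x)) (α (μ x x)) := by
      have := (h2 x).2
      rwa [homAssoc, sub_eq_zero, ← hmul x x] at this
    have hkey := key4 μ α hmul h1 x
    interval_cases m <;> interval_cases i <;>
      simp only [hp2, hp3, hp4, homPow, pow_zero, pow_one, pow_two,
        Module.End.one_apply, Module.End.mul_apply] <;>
      first
        | rfl
        | exact h1x
        | exact h2x
        | exact hkey
  · intro h3 x
    have e3 := h3 3 (by norm_num) (by norm_num) x 1 le_rfl (by norm_num)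
    have e4 := h3 4 (by norm_num) (by norm_num) x 2 (by norm_num) (by norm_num)
    simp only [hp2, hp3, hp4, homPow, pow_zero, pow_one, pow_two,
      Module.End.one_apply, Module.End.mul_apply] at e3 e4
    constructor
    · rw [homAssoc, sub_eq_zero]
      exact e3
    · rw [homAssoc, sub_eq_zero, ← hmul x x]
      exact e4
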